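/- For every nonnegative integer n and real u, u^n = \sum_{i=0}^{n} \delta_i^{(n)} q_i(u), where \delta_i^{(n)} = ((n+1)!/2^n) * (-1)^{n-i} (2i)! / ((n-i)! i! (2i+1-n)!) when (n-1)/2 \leq i \leq n, and \delta_i^{(n)} = 0 when 0 \leq i < (n-1)/2. -/

import Mathlib

open Finset

/-- The Bessel polynomial `q_n(u)`. -/
noncomputable def qBessel (n : ℕ) (u : ℝ) : ℝ :=
  ∑ k ∈ Finset.range (n + 1),
    ((n.factorial * (2 * n - k).factorial * 2 ^ k : ℝ) /
      ((2 * n).factorial * (n - k).factorial * k.factorial)) * u ^ k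

/-- Carlitz's coefficients. -/
noncomputable def carlitzDelta (n i : ℕ) : ℝ :=
  if n ≤ 2 * i + 1 then
    ((n + 1).factorial / 2 ^ n : ℝ) * ((-1) ^ (n - i) * (2 * i).factorial /
      ((n - i).factorial * i.factorial * (2 * i + 1 - n).factorial))
  else 0

noncomputable def bc (n k : ℕ) : ℝ :=
  ((n.factorial * (2 * n - k).factorial * 2 ^ k : ℝ) /
      ((2 * n).factorial * (n - k).factorial * k.factorial))

lemma fc_succ (m : ℕ) : ((m+1).factorial : ℝ) = (m+1) * m.factorial := by
  push_cast [Nat.factorial_succ]; ring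

lemma bc0 (n : ℕ) : bc n 0 = 1 := by
  unfold bc
  simp only [Nat.sub_zero, pow_zero, mul_one, Nat.factorial_zero, Nat.cast_one]
  rw [mul_comm, div_self]
  positivity

lemma bc1 (n : ℕ) : bc (n+1) 1 = 1 := by
  unfold bc
  have e1 : 2*(n+1) - 1 = 2*n+1 := by omega
  have e2 : (n+1) - 1 = n := by omega
  have e3 : 2*(n+1) = (2*n+1)+1 := by omega
  rw [e1, e2, e3]
  simp only [fc_succ]
  have h1 : ((2*n+1).factorial : ℝ) ≠ 0 := by positivity
  have h2 : ((n).factorial : ℝ) ≠ 0 := by positivity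
  have h3 : ((2*n).factorial : ℝ) ≠ 0 := by positivity
  field_simp
  push_cast
  ring

lemma bc_id1 (k m : ℕ) :
    bc (k+m+1) k = ((2*(k+m+1)+1)*(2*(k+m+1)+3) : ℝ) *
      (bc (k+m+1+2) (k+2) - bc (k+m+1+1) (k+2)) := by
  unfold bc
  have e1 : 2*(k+m+1) - k = k+2*m+2 := by omega
  have e2 : (k+m+1) - k = m+1 := by omega
  have e3 : 2*(k+m+1+2) - (k+2) = k+2*m+4 := by omega
  have e4 : (k+m+1+2) - (k+2) = m+1 := by omega
  have e5 : 2*(k+m+1+1) - (k+2) = k+2*m+2 := by omega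
  have e6 : (k+m+1+1) - (k+2) = m := by omega
  rw [e1,e2,e3,e4,e5,e6]
  have f1 : (k+m+1+2).factorial = ((k+m+1)+1+1).factorial := by ring_nf
  have f2 : (k+2*m+4).factorial = ((k+2*m+2)+1+1).factorial := by ring_nf
  have f3 : (2*(k+m+1+2)).factorial = (2*(k+m+1)+1+1+1+1).factorial := by ring_nf
  have f4 : (2*(k+m+1+1)).factorial = (2*(k+m+1)+1+1).factorial := by ring_nf
  have f5 : (k+m+1+1).factorial = ((k+m+1)+1).factorial := by ring_nf
  have f6 : (k+2).factorial = (k+1+1).factorial := by ring_nf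
  have f7 : (m+1).factorial = (m+1) * m.factorial := Nat.factorial_succ m
  rw [f1,f2,f3,f4,f5,f6]
  simp only [fc_succ]
  push_cast [f7]
  have h1 : ((k+m+1).factorial : ℝ) ≠ 0 := by positivity
  have h2 : ((k+2*m+2).factorial : ℝ) ≠ 0 := by positivity
  have h3 : ((2*(k+m+1)).factorial : ℝ) ≠ 0 := by positivity
  have h4 : ((m).factorial : ℝ) ≠ 0 := by positivity
  have h5 : ((k).factorial : ℝ) ≠ 0 := by positivity
  field_simp
  ring

lemma bc_id2 (i : ℕ) :
    bc i i = ((2*i+1)*(2*i+3) : ℝ) * bc (i+2) (i+2) := by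
  unfold bc
  have e1 : 2*i - i = i := by omega
  have e2 : i - i = 0 := by omega
  have e3 : 2*(i+2) - (i+2) = i+2 := by omega
  have e4 : (i+2) - (i+2) = 0 := by omega
  rw [e1,e2,e3,e4]
  have f1 : (i+2).factorial = (i+1+1).factorial := by ring_nf
  have f3 : (2*(i+2)).factorial = (2*i+1+1+1+1).factorial := by ring_nf
  rw [f1,f3]
  simp only [fc_succ]
  push_cast [Nat.factorial_zero]
  have h3 : ((2*i).factorial : ℝ) ≠ 0 := by positivity
  have h5 : ((i).factorial : ℝ) ≠ 0 := by positivity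
  field_simp
  ring

lemma qB_eq (n : ℕ) (u : ℝ) : qBessel n u = ∑ k ∈ Finset.range (n+1), bc n k * u^k := rfl

lemma qmul (i : ℕ) (u : ℝ) :
    u^2 * qBessel i u = ((2*i+1)*(2*i+3) : ℝ) * (qBessel (i+2) u - qBessel (i+1) u) := by
  simp only [qB_eq]
  rw [Finset.mul_sum]
  have L : ∑ k ∈ range (i+1), u^2 * (bc i k * u^k)
      = ∑ k ∈ range i, bc i k * u^(k+2) + bc i i * u^(i+2) := by
    rw [← Finset.sum_range_succ (fun k => bc i k * u^(k+2)) i]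
    exact Finset.sum_congr rfl fun k _ => by ring
  rw [L]
  have S2 : ∑ k ∈ range (i+2+1), bc (i+2) k * u^k
      = (∑ k ∈ range i, bc (i+2) (k+2) * u^(k+2) + bc (i+2) (i+2) * u^(i+2)) + u + 1 := by
    rw [Finset.sum_range_succ' (fun k => bc (i+2) k * u^k) (i+2),
        Finset.sum_range_succ' (fun k => bc (i+2) (k+1) * u^(k+1)) (i+1),
        ← Finset.sum_range_succ (fun k => bc (i+2) (k+2) * u^(k+2)) i]
    rw [bc0, bc1]
    norm_num
  have S1 : ∑ k ∈ range (i+1+1), bc (i+1) k * u^k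
      = ∑ k ∈ range i, bc (i+1) (k+2) * u^(k+2) + u + 1 := by
    rw [Finset.sum_range_succ' (fun k => bc (i+1) k * u^k) (i+1),
        Finset.sum_range_succ' (fun k => bc (i+1) (k+1) * u^(k+1)) i]
    rw [bc0, bc1]
    norm_num
  rw [S2, S1]
  have key : ∑ k ∈ range i, bc i k * u^(k+2)
      = ∑ k ∈ range i, ((2*i+1)*(2*i+3) : ℝ) * (bc (i+2) (k+2) - bc (i+1) (k+2)) * u^(k+2) := by
    refine Finset.sum_congr rfl fun k hk => ?_
    obtain ⟨m, rfl⟩ : ∃ m, i = k + m + 1 := ⟨i - k - 1, by have := Finset.mem_range.mp hk; omega⟩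
    rw [bc_id1]
    push_cast
    ring
  rw [key, bc_id2]
  have D : ∑ k ∈ range i, ((2*i+1)*(2*i+3) : ℝ) * (bc (i+2) (k+2) - bc (i+1) (k+2)) * u^(k+2)
      = ((2*i+1)*(2*i+3) : ℝ) * (∑ k ∈ range i, bc (i+2) (k+2) * u^(k+2))
        - ((2*i+1)*(2*i+3) : ℝ) * (∑ k ∈ range i, bc (i+1) (k+2) * u^(k+2)) := by
    rw [Finset.mul_sum, Finset.mul_sum, ← Finset.sum_sub_distrib]
    exact Finset.sum_congr rfl fun k _ => by ring
  rw [D]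
  ring

lemma deltaB0 (n : ℕ) : carlitzDelta (n+2) 0 = 0 := by
  simp only [carlitzDelta]
  rw [if_neg (by omega)]

lemma deltaB1 (n : ℕ) : carlitzDelta (n+2) 1 = (-3 : ℝ) * carlitzDelta n 0 := by
  match n with
  | 0 => norm_num [carlitzDelta, Nat.factorial]
  | 1 => norm_num [carlitzDelta, Nat.factorial]
  | (m+2) =>
    simp only [carlitzDelta]
    rw [if_neg (by omega), if_neg (by omega)]
    ring

lemma deltaB3 (n : ℕ) :
    carlitzDelta (n+2) (n+2) = ((2*n+1)*(2*n+3) : ℝ) * carlitzDelta n n := by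
  simp only [carlitzDelta]
  rw [if_pos (by omega), if_pos (by omega)]
  have s1 : n + 2 - (n + 2) = 0 := by omega
  have s2 : 2 * (n + 2) + 1 - (n + 2) = n + 3 := by omega
  have s3 : n - n = 0 := by omega
  have s4 : 2 * n + 1 - n = n + 1 := by omega
  rw [s1, s2, s3, s4]
  have f1 : (n+2+1).factorial = (n+1+1+1).factorial := by ring_nf
  have f2 : (2*(n+2)).factorial = (2*n+1+1+1+1).factorial := by ring_nf
  have f3 : (n+2).factorial = (n+1+1).factorial := by ring_nf
  have f4 : (n+3).factorial = (n+1+1+1).factorial := by ring_nf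
  rw [f1, f2, f3, f4]
  rw [show (2:ℝ)^(n+2) = 2^n*2^2 from pow_add 2 _ 2]
  simp only [fc_succ]
  push_cast [Nat.factorial_zero]
  have h1 : ((2*n).factorial : ℝ) ≠ 0 := by positivity
  have h2 : ((n).factorial : ℝ) ≠ 0 := by positivity
  have h3 : ((n+1).factorial : ℝ) ≠ 0 := by positivity
  have h6 : (2:ℝ)^n ≠ 0 := by positivity
  field_simp
  ring

lemma deltaB2 (n i : ℕ) (h : i + 1 ≤ n) :
    carlitzDelta (n+2) (i+2) = ((2*i+1)*(2*i+3) : ℝ) * carlitzDelta n i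
      - ((2*i+3)*(2*i+5) : ℝ) * carlitzDelta n (i+1) := by
  rcases le_or_gt n (2*i+1) with h2 | h2
  · obtain ⟨a, rfl⟩ : ∃ a, n = i+1+a := ⟨n-i-1, by omega⟩
    obtain ⟨b, rfl⟩ : ∃ b, i = a+b := ⟨i-a, by omega⟩
    simp only [carlitzDelta]
    rw [if_pos (by omega), if_pos (by omega), if_pos (by omega)]
    have s1 : a + b + 1 + a + 2 - (a + b + 2) = a + 1 := by omega
    have s2 : 2 * (a + b + 2) + 1 - (a + b + 1 + a + 2) = b + 2 := by omega
    have s3 : a + b + 1 + a - (a + b) = a + 1 := by omega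
    have s4 : 2 * (a + b) + 1 - (a + b + 1 + a) = b := by omega
    have s5 : a + b + 1 + a - (a + b + 1) = a := by omega
    have s6 : 2 * (a + b + 1) + 1 - (a + b + 1 + a) = b + 2 := by omega
    rw [s1, s2, s3, s4, s5, s6]
    have f1 : (a+b+1+a+2+1).factorial = ((a+b+1+a+1)+1+1).factorial := by ring_nf
    have f2 : (2*(a+b+2)).factorial = (2*(a+b)+1+1+1+1).factorial := by ring_nf
    have f3 : (2*(a+b+1)).factorial = (2*(a+b)+1+1).factorial := by ring_nf
    have f4 : (a+b+2).factorial = ((a+b)+1+1).factorial := by ring_nf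
    have f5 : (b+2).factorial = (b+1+1).factorial := by ring_nf
    rw [f1, f2, f3, f4, f5]
    rw [show (2:ℝ)^(a+b+1+a+2) = 2^(a+b+1+a)*2^2 from pow_add 2 _ 2]
    rw [pow_succ (-1 : ℝ) a]
    simp only [fc_succ]
    have h1 : ((a+b+1+a+1).factorial : ℝ) ≠ 0 := by positivity
    have h2' : ((2*(a+b)).factorial : ℝ) ≠ 0 := by positivity
    have h3 : ((a+b).factorial : ℝ) ≠ 0 := by positivity
    have h4 : ((a).factorial : ℝ) ≠ 0 := by positivity
    have h5 : ((b).factorial : ℝ) ≠ 0 := by positivity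
    have h6 : (2:ℝ)^(a+b+1+a) ≠ 0 := by positivity
    field_simp
    push_cast
    ring
  · rcases le_or_gt n (2*i+3) with h3 | h3
    · obtain hb | hc : n = 2*i+2 ∨ n = 2*i+3 := by omega
      · subst hb
        simp only [carlitzDelta]
        rw [if_pos (by omega), if_neg (by omega), if_pos (by omega)]
        have s1 : 2 * i + 2 + 2 - (i + 2) = i + 2 := by omega
        have s2 : 2 * (i + 2) + 1 - (2 * i + 2 + 2) = 1 := by omega
        have s3 : 2 * i + 2 - (i + 1) = i + 1 := by omega
        have s4 : 2 * (i + 1) + 1 - (2 * i + 2) = 1 := by omega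
        rw [s1, s2, s3, s4]
        have f1 : (2*i+2+2+1).factorial = ((2*i+2)+1+1+1).factorial := by ring_nf
        have f2 : (2*(i+2)).factorial = ((2*i+2)+1+1).factorial := by ring_nf
        have f3 : (i+2).factorial = (i+1+1).factorial := by ring_nf
        have f4 : (2*i+2+1).factorial = ((2*i+2)+1).factorial := by ring_nf
        have f5 : (2*(i+1)).factorial = ((2*i+2)).factorial := by ring_nf
        rw [f1, f2, f3, f4, f5]
        rw [show (2:ℝ)^(2*i+2+2) = 2^(2*i+2)*2^2 from pow_add 2 _ 2]
        rw [show ((-1:ℝ))^(i+2) = (-1)^i*(-1)^2 from pow_add (-1:ℝ) i 2,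
            show ((-1:ℝ))^(i+1) = (-1)^i*(-1)^1 from pow_add (-1:ℝ) i 1]
        simp only [fc_succ]
        have h1 : ((2*i+2).factorial : ℝ) ≠ 0 := by positivity
        have h4 : ((i).factorial : ℝ) ≠ 0 := by positivity
        have h6 : (2:ℝ)^(2*i+2) ≠ 0 := by positivity
        field_simp
        push_cast
        ring
      · subst hc
        simp only [carlitzDelta]
        rw [if_pos (by omega), if_neg (by omega), if_pos (by omega)]
        have s1 : 2 * i + 3 + 2 - (i + 2) = i + 3 := by omega
        have s2 : 2 * (i + 2) + 1 - (2 * i + 3 + 2) = 0 := by omega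
        have s3 : 2 * i + 3 - (i + 1) = i + 2 := by omega
        have s4 : 2 * (i + 1) + 1 - (2 * i + 3) = 0 := by omega
        rw [s1, s2, s3, s4]
        have f1 : (2*i+3+2+1).factorial = ((2*i+2)+1+1+1+1).factorial := by ring_nf
        have f2 : (2*(i+2)).factorial = ((2*i+2)+1+1).factorial := by ring_nf
        have f3 : (i+3).factorial = (i+1+1+1).factorial := by ring_nf
        have f3b : (i+2).factorial = (i+1+1).factorial := by ring_nf
        have f4 : (2*i+3+1).factorial = ((2*i+2)+1+1).factorial := by ring_nf
        have f5 : (2*(i+1)).factorial = ((2*i+2)).factorial := by ring_nf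
        rw [f1, f2, f3, f3b, f4, f5]
        rw [show (2:ℝ)^(2*i+3+2) = 2^(2*i+3)*2^2 from pow_add 2 _ 2]
        rw [show ((-1:ℝ))^(i+3) = (-1)^i*(-1)^3 from pow_add (-1:ℝ) i 3,
            show ((-1:ℝ))^(i+2) = (-1)^i*(-1)^2 from pow_add (-1:ℝ) i 2]
        simp only [fc_succ]
        have h1 : ((2*i+2).factorial : ℝ) ≠ 0 := by positivity
        have h4 : ((i).factorial : ℝ) ≠ 0 := by positivity
        have h6 : (2:ℝ)^(2*i+3) ≠ 0 := by positivity
        field_simp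
        push_cast
        ring
    · simp only [carlitzDelta]
      rw [if_neg (by omega), if_neg (by omega), if_neg (by omega)]
      ring

theorem pow_eq_sum_carlitz (n : ℕ) (u : ℝ) :
    u ^ n = ∑ i ∈ Finset.range (n + 1), carlitzDelta n i * qBessel i u := by
  induction n using Nat.strong_induction_on with
  | _ n ih =>
    match n with
    | 0 => norm_num [carlitzDelta, qBessel, Nat.factorial]
    | 1 =>
      norm_num [Finset.sum_range_succ, carlitzDelta, qBessel, Nat.factorial]
    | (n+2) =>
      have ihn : u ^ n = ∑ i ∈ Finset.range (n+1), carlitzDelta n i * qBessel i u :=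
        ih n (by omega)
      have step1 : u^(n+2) = ∑ i ∈ range (n+1), carlitzDelta n i * (u^2 * qBessel i u) := by
        rw [show u^(n+2) = u^2 * u^n by ring, ihn, Finset.mul_sum]
        exact Finset.sum_congr rfl fun i _ => by ring
      rw [step1]
      have step2 : ∑ i ∈ range (n+1), carlitzDelta n i * (u^2 * qBessel i u)
          = ∑ i ∈ range (n+1), (((2*i+1)*(2*i+3) : ℝ) * carlitzDelta n i * qBessel (i+2) u
              - ((2*i+1)*(2*i+3) : ℝ) * carlitzDelta n i * qBessel (i+1) u) := by
        refine Finset.sum_congr rfl fun i _ => ?_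
        rw [qmul]
        ring
      rw [step2, Finset.sum_sub_distrib]
      rw [Finset.sum_range_succ' (fun j => carlitzDelta (n+2) j * qBessel j u) (n+2),
          Finset.sum_range_succ' (fun j => carlitzDelta (n+2) (j+1) * qBessel (j+1) u) (n+1)]
      rw [deltaB0, deltaB1, zero_mul, add_zero]
      have split : ∑ j ∈ range (n+1), carlitzDelta (n+2) (j+1+1) * qBessel (j+1+1) u
          = ∑ j ∈ range (n+1), ((2*j+1)*(2*j+3) : ℝ) * carlitzDelta n j * qBessel (j+2) u
            - ∑ j ∈ range n, ((2*(j+1)+1)*(2*(j+1)+3) : ℝ) * carlitzDelta n (j+1) * qBessel (j+2) u := by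
        rw [Finset.sum_range_succ
              (fun j => ((2*j+1)*(2*j+3) : ℝ) * carlitzDelta n j * qBessel (j+2) u) n,
            Finset.sum_range_succ
              (fun j => carlitzDelta (n+2) (j+1+1) * qBessel (j+1+1) u) n]
        have inner : ∑ j ∈ range n, carlitzDelta (n+2) (j+1+1) * qBessel (j+1+1) u
            = ∑ j ∈ range n, (((2*j+1)*(2*j+3) : ℝ) * carlitzDelta n j * qBessel (j+2) u
              - ((2*(j+1)+1)*(2*(j+1)+3) : ℝ) * carlitzDelta n (j+1) * qBessel (j+2) u) := by
          refine Finset.sum_congr rfl fun j hj => ?_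
          have hj' : j + 1 ≤ n := Finset.mem_range.mp hj
          rw [show j+1+1 = j+2 from rfl, deltaB2 n j hj']
          push_cast
          ring
        rw [inner, Finset.sum_sub_distrib, deltaB3]
        push_cast
        ring
      rw [split]
      have shift : ∑ i ∈ range (n+1), ((2*i+1)*(2*i+3) : ℝ) * carlitzDelta n i * qBessel (i+1) u
          = ∑ j ∈ range n, ((2*(j+1)+1)*(2*(j+1)+3) : ℝ) * carlitzDelta n (j+1) * qBessel (j+2) u
            + ((2*(0:ℕ)+1)*(2*(0:ℕ)+3) : ℝ) * carlitzDelta n 0 * qBessel 1 u := by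
        rw [Finset.sum_range_succ'
              (fun i => ((2*i+1)*(2*i+3) : ℝ) * carlitzDelta n i * qBessel (i+1) u) n]
        push_cast
        ring_nf
      rw [shift]
      push_cast
      ring
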